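/- Let S be a scheme and G a group S-scheme which is universally open and quasicompact over S. If G acts on an S-scheme X, then every point of X is contained in a G-invariant quasicompact open subscheme of X. -/

import Mathlib

open AlgebraicGeometry CategoryTheory CategoryTheory.Limits CategoryTheory.MorphismProperty

/-- A morphism of schemes is universally open if every base change of it is an open map
on underlying topological spaces. -/
def SchemeHomUniversallyOpen {X S : AlgebraicGeometry.Scheme} (f : X ⟶ S) : Prop :=
  universally (topologically @IsOpenMap) f

theorem aux_lift_eq {C : Type*} [Category C] {W A B Z : C} {u : A ⟶ Z} {v : B ⟶ Z}
    [HasPullback u v] {a a' : W ⟶ A} {x x' : W ⟶ B} (ha : a = a') (hx : x = x')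
    (h : a ≫ u = x ≫ v) (h' : a' ≫ u = x' ≫ v) :
    pullback.lift a x h = pullback.lift a' x' h' := by subst ha hx; rfl

section
variable {G X S : AlgebraicGeometry.Scheme} (g : G ⟶ S) (f : X ⟶ S)
    (m : pullback g g ⟶ G) (hm : m ≫ g = pullback.fst g g ≫ g)
    (e : S ⟶ G) (he : e ≫ g = 𝟙 S)
    (ι : G ⟶ G) (hι : ι ≫ g = g)
    (φ : pullback g f ⟶ X) (hφ : φ ≫ f = pullback.snd g f ≫ f)

theorem aux_cancel
    (hinv_mul : ∀ {W : AlgebraicGeometry.Scheme} (a : W ⟶ G),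
      pullback.lift (a ≫ ι) a (by simp [hι]) ≫ m = a ≫ g ≫ e)
    (hunit : pullback.lift (f ≫ e) (𝟙 X) (by simp [he]) ≫ φ = 𝟙 X)
    (hassoc : ∀ {W : AlgebraicGeometry.Scheme} (a b : W ⟶ G) (x : W ⟶ X)
      (hab : a ≫ g = b ≫ g) (hbx : b ≫ g = x ≫ f),
      pullback.lift a (pullback.lift b x hbx ≫ φ) (by simpa [hφ, hab, pullback.lift_snd_assoc] using hbx) ≫ φ =
      pullback.lift (pullback.lift a b hab ≫ m) x (by simpa [hm, hab, pullback.lift_fst_assoc] using hbx) ≫ φ)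
    {W : AlgebraicGeometry.Scheme} (a : W ⟶ G) (x : W ⟶ X) (hax : a ≫ g = x ≫ f) :
    pullback.lift (a ≫ ι) (pullback.lift a x hax ≫ φ)
      (by simp only [Category.assoc, hι, hφ, pullback.lift_snd_assoc]; exact hax) ≫ φ = x := by
  have h1 : (a ≫ ι) ≫ g = a ≫ g := by simp [hι]
  have step := hassoc (a ≫ ι) a x h1 hax
  rw [step]
  have hcond : (pullback.lift (a ≫ ι) a h1 ≫ m) ≫ g = x ≫ f := by
    simp only [Category.assoc, hm, pullback.lift_fst_assoc, hι]; exact hax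
  have h2 : pullback.lift (pullback.lift (a ≫ ι) a h1 ≫ m) x hcond =
      x ≫ pullback.lift (f ≫ e) (𝟙 X) (by simp [he]) := by
    apply pullback.hom_ext
    · simp only [pullback.lift_fst, Category.assoc, pullback.lift_fst]
      rw [hinv_mul a, ← Category.assoc, hax, Category.assoc]
    · rw [pullback.lift_snd, Category.assoc, pullback.lift_snd, Category.comp_id]
  rw [h2, Category.assoc, hunit, Category.comp_id]
end

theorem AlgebraicGeometry.Scheme.comp_base_apply {X Y Z : AlgebraicGeometry.Scheme} (f : X ⟶ Y)
    (g : Y ⟶ Z) (x : X) : (f ≫ g).base x = g.base (f.base x) := rfl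

/-- Let `S` be a scheme and `G` a group scheme over `S` (structure map `g`, multiplication `m`,
unit `e`, inversion `ι`) which is universally open and quasicompact over `S`.  If `G` acts on an
`S`-scheme `X` via `φ : G ×_S X ⟶ X`, then every point of `X` is contained in a `G`-invariant
quasicompact open subscheme of `X`. -/
theorem point_in_invariant_quasicompact_open
    {G X S : AlgebraicGeometry.Scheme} (g : G ⟶ S) (f : X ⟶ S)
    (hg : SchemeHomUniversallyOpen g) [QuasiCompact g]
    -- group scheme structure on `G` over `S`
    (m : pullback g g ⟶ G) (hm : m ≫ g = pullback.fst g g ≫ g)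
    (e : S ⟶ G) (he : e ≫ g = 𝟙 S)
    (ι : G ⟶ G) (hι : ι ≫ g = g)
    (hmul_assoc : ∀ {W : AlgebraicGeometry.Scheme} (a b c : W ⟶ G)
      (hab : a ≫ g = b ≫ g) (hbc : b ≫ g = c ≫ g),
      pullback.lift (pullback.lift a b hab ≫ m) c (by simpa [hm, hab, pullback.lift_fst_assoc] using hbc) ≫ m =
      pullback.lift a (pullback.lift b c hbc ≫ m) (by simpa [hm, pullback.lift_fst_assoc] using hab) ≫ m)
    (hone_mul : ∀ {W : AlgebraicGeometry.Scheme} (a : W ⟶ G),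
      pullback.lift (a ≫ g ≫ e) a (by simp [he]) ≫ m = a)
    (hinv_mul : ∀ {W : AlgebraicGeometry.Scheme} (a : W ⟶ G),
      pullback.lift (a ≫ ι) a (by simp [hι]) ≫ m = a ≫ g ≫ e)
    -- the action `φ`
    (φ : pullback g f ⟶ X) (hφ : φ ≫ f = pullback.snd g f ≫ f)
    (hunit : pullback.lift (f ≫ e) (𝟙 X) (by simp [he]) ≫ φ = 𝟙 X)
    (hassoc : ∀ {W : AlgebraicGeometry.Scheme} (a b : W ⟶ G) (x : W ⟶ X)
      (hab : a ≫ g = b ≫ g) (hbx : b ≫ g = x ≫ f),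
      pullback.lift a (pullback.lift b x hbx ≫ φ) (by simpa [hφ, hab, pullback.lift_snd_assoc] using hbx) ≫ φ =
      pullback.lift (pullback.lift a b hab ≫ m) x (by simpa [hm, hab, pullback.lift_fst_assoc] using hbx) ≫ φ) :
    ∀ x : X, ∃ U : X.Opens, x ∈ U ∧ IsCompact U.carrier ∧
      (∀ p : (pullback g f : AlgebraicGeometry.Scheme), (pullback.snd g f).base p ∈ U → φ.base p ∈ U) := by
  intro x
  -- an affine (hence quasicompact) open neighbourhood of `x`
  obtain ⟨_, ⟨W, hWa, rfl⟩, hxW, -⟩ :=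
    X.isBasis_affineOpens.exists_subset_of_mem_open (Set.mem_univ x) isOpen_univ
  have hWc : IsCompact (W : Set X) := hWa.isCompact
  have hopen : IsOpenMap (pullback.snd g f).base :=
    hg (pullback.fst g f) f (pullback.snd g f) (IsPullback.of_hasPullback g f).flip
  -- the "inverse action" morphism ψ : (a, x) ↦ a⁻¹ · x
  have hψcond : (pullback.fst g f ≫ ι) ≫ g = pullback.snd g f ≫ f := by
    simp only [Category.assoc, hι]; exact pullback.condition
  set ψ : (pullback g f : AlgebraicGeometry.Scheme) ⟶ X :=
    pullback.lift (pullback.fst g f ≫ ι) (pullback.snd g f) hψcond ≫ φ with hψdef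
  -- key identity F3 : σ ≫ ψ = pr₂ where σ = (a,x) ↦ (a, a·x)
  have cond3 : pullback.fst g f ≫ g = φ ≫ f := by rw [hφ]; exact pullback.condition
  have hF3 : pullback.lift (pullback.fst g f) φ cond3 ≫ ψ = pullback.snd g f := by
    have key := aux_cancel g f m hm e he ι hι φ hφ hinv_mul hunit hassoc
      (pullback.fst g f) (pullback.snd g f) pullback.condition
    have id1 : pullback.lift (pullback.fst g f) (pullback.snd g f) pullback.condition =
        𝟙 _ := by apply pullback.hom_ext <;> simp
    have comp1 : pullback.lift (pullback.fst g f) φ cond3 ≫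
        pullback.lift (pullback.fst g f ≫ ι) (pullback.snd g f) hψcond =
        pullback.lift (pullback.fst g f ≫ ι)
          (pullback.lift (pullback.fst g f) (pullback.snd g f) pullback.condition ≫ φ)
          (by rw [id1, Category.id_comp]; simp only [Category.assoc, hι]; exact cond3) := by
      apply pullback.hom_ext <;> simp [id1, pullback.lift_fst, pullback.lift_snd, pullback.lift_fst_assoc, pullback.lift_snd_assoc]
    rw [hψdef, ← Category.assoc, comp1]
    exact key
  -- key identity F4 : (a,x) ↦ (ι(ι(a)))·(ψ(a,x)) equals pr₂
  have hF4 : pullback.lift ((pullback.fst g f ≫ ι) ≫ ι) ψ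
      (by simp only [Category.assoc, hι, hψdef, hφ, pullback.lift_snd_assoc]
          exact pullback.condition) ≫ φ = pullback.snd g f := by
    have key := aux_cancel g f m hm e he ι hι φ hφ hinv_mul hunit hassoc
      (pullback.fst g f ≫ ι) (pullback.snd g f) hψcond
    exact key
  -- key identity F5 : x ↦ e⁻¹ · (e · x) is the identity
  have hF5 : pullback.lift (f ≫ e) (𝟙 X) (by simp [he]) ≫ ψ = 𝟙 X := by
    have key := aux_cancel g f m hm e he ι hι φ hφ hinv_mul hunit hassoc
      (f ≫ e) (𝟙 X) (by simp [he])
    have comp1 : pullback.lift (f ≫ e) (𝟙 X) (by simp [he]) ≫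
        pullback.lift (pullback.fst g f ≫ ι) (pullback.snd g f) hψcond =
        pullback.lift ((f ≫ e) ≫ ι)
          (pullback.lift (f ≫ e) (𝟙 X) (by simp [he]) ≫ φ)
          (by simp only [Category.assoc, hι, hφ, pullback.lift_snd_assoc]; simp [he]) := by
      apply pullback.hom_ext
      · simp [pullback.lift_fst, pullback.lift_snd, pullback.lift_fst_assoc, pullback.lift_snd_assoc]
      · simp only [Category.assoc, pullback.lift_snd, pullback.lift_snd_assoc]
        rw [hunit]
    rw [hψdef, ← Category.assoc, comp1]
    exact key
  -- the invariant open set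
  have cond4 : ((pullback.fst g f ≫ ι) ≫ ι) ≫ g = ψ ≫ f := by
    simp only [Category.assoc, hι, hψdef, hφ, pullback.lift_snd_assoc]
    exact pullback.condition
  -- the two descriptions of the candidate open set agree
  have hUeq : (pullback.snd g f).base '' (ψ.base ⁻¹' (W : Set X)) =
      φ.base '' ((pullback.snd g f).base ⁻¹' (W : Set X)) := by
    apply Set.Subset.antisymm
    · rintro _ ⟨p, hp, rfl⟩
      refine ⟨(pullback.lift ((pullback.fst g f ≫ ι) ≫ ι) ψ cond4).base p, ?_, ?_⟩
      · show (pullback.snd g f).base _ ∈ (W : Set X)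
        rw [← Scheme.comp_base_apply, pullback.lift_snd]
        exact hp
      · rw [← Scheme.comp_base_apply, hF4]
    · rintro _ ⟨q, hq, rfl⟩
      refine ⟨(pullback.lift (pullback.fst g f) φ cond3).base q, ?_, ?_⟩
      · show ψ.base _ ∈ (W : Set X)
        rw [← Scheme.comp_base_apply, hF3]
        exact hq
      · rw [← Scheme.comp_base_apply, pullback.lift_snd]
  refine ⟨⟨(pullback.snd g f).base '' (ψ.base ⁻¹' (W : Set X)),
    hopen _ (W.2.preimage ψ.base.hom.continuous)⟩, ?_, ?_, ?_⟩
  · -- membership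
    show x ∈ (pullback.snd g f).base '' (ψ.base ⁻¹' (W : Set X))
    refine ⟨(pullback.lift (f ≫ e) (𝟙 X) (by simp [he])).base x, ?_, ?_⟩
    · show ψ.base _ ∈ (W : Set X)
      rw [← Scheme.comp_base_apply, hF5]
      simpa using hxW
    · rw [← Scheme.comp_base_apply, pullback.lift_snd]
      simp
  · -- quasicompactness
    show IsCompact ((pullback.snd g f).base '' (ψ.base ⁻¹' (W : Set X)))
    rw [hUeq]
    exact (QuasiCompact.isCompact_preimage (W : Set X) W.2 hWc).image φ.base.hom.continuous
  · -- invariance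
    intro p hp
    have hp' : (pullback.snd g f).base p ∈
        φ.base '' ((pullback.snd g f).base ⁻¹' (W : Set X)) := hUeq ▸ hp
    obtain ⟨q, hq, hq2⟩ := hp'
    obtain ⟨z, hz1, hz2⟩ := Scheme.Pullback.exists_preimage_pullback
      (f := pullback.snd g f) (g := φ) p q hq2.symm
    have haw : (pullback.fst (pullback.snd g f) φ ≫ pullback.fst g f) ≫ g =
        (pullback.snd (pullback.snd g f) φ ≫ pullback.snd g f) ≫ f := by
      rw [Category.assoc, pullback.condition (f := g) (g := f), ← Category.assoc,
        pullback.condition (f := pullback.snd g f) (g := φ), Category.assoc, hφ,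
        ← Category.assoc]
    have hbw : (pullback.snd (pullback.snd g f) φ ≫ pullback.fst g f) ≫ g =
        (pullback.snd (pullback.snd g f) φ ≫ pullback.snd g f) ≫ f := by
      rw [Category.assoc, pullback.condition (f := g) (g := f), ← Category.assoc]
    have hab : (pullback.fst (pullback.snd g f) φ ≫ pullback.fst g f) ≫ g =
        (pullback.snd (pullback.snd g f) φ ≫ pullback.fst g f) ≫ g := haw.trans hbw.symm
    have hZsnd : pullback.snd (pullback.snd g f) φ =
        pullback.lift (pullback.snd (pullback.snd g f) φ ≫ pullback.fst g f)
          (pullback.snd (pullback.snd g f) φ ≫ pullback.snd g f) hbw := by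
      apply pullback.hom_ext <;> simp [pullback.lift_fst, pullback.lift_snd, pullback.lift_fst_assoc, pullback.lift_snd_assoc]
    have hcf : (pullback.fst (pullback.snd g f) φ ≫ pullback.fst g f) ≫ g =
        (pullback.lift (pullback.snd (pullback.snd g f) φ ≫ pullback.fst g f)
          (pullback.snd (pullback.snd g f) φ ≫ pullback.snd g f) hbw ≫ φ) ≫ f := by
      simp only [Category.assoc, hφ, pullback.lift_snd_assoc]
      simpa using haw
    have hZfst : pullback.fst (pullback.snd g f) φ =
        pullback.lift (pullback.fst (pullback.snd g f) φ ≫ pullback.fst g f)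
          (pullback.lift (pullback.snd (pullback.snd g f) φ ≫ pullback.fst g f)
            (pullback.snd (pullback.snd g f) φ ≫ pullback.snd g f) hbw ≫ φ) hcf := by
      apply pullback.hom_ext
      · simp [pullback.lift_fst, pullback.lift_snd, pullback.lift_fst_assoc, pullback.lift_snd_assoc]
      · rw [pullback.lift_snd, ← hZsnd]
        exact pullback.condition
    have hcl : (pullback.lift (pullback.fst (pullback.snd g f) φ ≫ pullback.fst g f)
          (pullback.snd (pullback.snd g f) φ ≫ pullback.fst g f) hab ≫ m) ≫ g =
        (pullback.snd (pullback.snd g f) φ ≫ pullback.snd g f) ≫ f := by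
      simp only [Category.assoc, hm, pullback.lift_fst_assoc]
      simpa using haw
    have hmain : pullback.fst (pullback.snd g f) φ ≫ φ =
        pullback.lift (pullback.lift (pullback.fst (pullback.snd g f) φ ≫ pullback.fst g f)
            (pullback.snd (pullback.snd g f) φ ≫ pullback.fst g f) hab ≫ m)
          (pullback.snd (pullback.snd g f) φ ≫ pullback.snd g f) hcl ≫ φ := by
      conv_lhs => rw [hZfst]
      exact hassoc _ _ _ hab hbw
    show φ.base p ∈ (pullback.snd g f).base '' (ψ.base ⁻¹' (W : Set X))
    rw [hUeq]
    refine ⟨(pullback.lift (pullback.lift (pullback.fst (pullback.snd g f) φ ≫ pullback.fst g f)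
        (pullback.snd (pullback.snd g f) φ ≫ pullback.fst g f) hab ≫ m)
        (pullback.snd (pullback.snd g f) φ ≫ pullback.snd g f) hcl).base z, ?_, ?_⟩
    · show (pullback.snd g f).base _ ∈ (W : Set X)
      rw [← Scheme.comp_base_apply, pullback.lift_snd, Scheme.comp_base_apply, hz2]
      exact hq
    · rw [← Scheme.comp_base_apply, ← hmain, Scheme.comp_base_apply, hz1]
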